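/- Let ε ≥ 0 and δ ∈ [0,1], and let P and Q be probability measures on a measurable space such that for every measurable set A, Q(A) ≤ e^ε·P(A) + δ and P(A) ≤ e^ε·Q(A) + δ. Then for every measurable set S, (1/2)·Q(S) + (1/2)·P(Sᶜ) ≤ 1 − (1 − δ)/(1 + e^ε). In particular, when δ = 0 the balanced accuracy of any membership test is at most e^ε/(1 + e^ε). -/

import Mathlib

open MeasureTheory

/-- If `Q` (member output distribution) and `P` (non-member output distribution)
are `(ε, δ)`-indistinguishable, then the balanced accuracy of any membership test
`S` is at most `1 − (1−δ)/(1+e^ε)`; in particular, when `δ = 0` it is at most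
`e^ε/(1+e^ε)`. -/
theorem dp_balanced_accuracy_bound
    {X : Type*} [MeasurableSpace X] (P Q : Measure X)
    [IsProbabilityMeasure P] [IsProbabilityMeasure Q]
    (ε δ : ℝ) (hε : 0 ≤ ε) (hδ : δ ∈ Set.Icc (0 : ℝ) 1)
    (hQP : ∀ A : Set X, MeasurableSet A →
      Q A ≤ ENNReal.ofReal (Real.exp ε) * P A + ENNReal.ofReal δ)
    (hPQ : ∀ A : Set X, MeasurableSet A →
      P A ≤ ENNReal.ofReal (Real.exp ε) * Q A + ENNReal.ofReal δ) :
    (∀ S : Set X, MeasurableSet S →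
      2⁻¹ * Q S + 2⁻¹ * P Sᶜ ≤ ENNReal.ofReal (1 - (1 - δ) / (1 + Real.exp ε))) ∧
    (δ = 0 → ∀ S : Set X, MeasurableSet S →
      2⁻¹ * Q S + 2⁻¹ * P Sᶜ ≤ ENNReal.ofReal (Real.exp ε / (1 + Real.exp ε))) := by
  obtain ⟨hδ0, hδ1⟩ := hδ
  have hE1 : (1:ℝ) ≤ Real.exp ε := Real.one_le_exp hε
  have hEpos : (0:ℝ) < 1 + Real.exp ε := by linarith
  have main : ∀ S : Set X, MeasurableSet S →
      2⁻¹ * Q S + 2⁻¹ * P Sᶜ ≤ ENNReal.ofReal (1 - (1 - δ) / (1 + Real.exp ε)) := by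
    intro S hS
    have hQne : Q S ≠ ⊤ := measure_ne_top Q S
    have hPne : P Sᶜ ≠ ⊤ := measure_ne_top P Sᶜ
    set q := (Q S).toReal with hqdef
    set p := (P S).toReal with hpdef
    have hq0 : 0 ≤ q := ENNReal.toReal_nonneg
    have hp0 : 0 ≤ p := ENNReal.toReal_nonneg
    have hq1 : q ≤ 1 := by
      simpa using ENNReal.toReal_mono (by simp) (prob_le_one (μ := Q) (s := S))
    have hp1 : p ≤ 1 := by
      simpa using ENNReal.toReal_mono (by simp) (prob_le_one (μ := P) (s := S))
    have hPc : (P Sᶜ).toReal = 1 - p := by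
      rw [prob_compl_eq_one_sub hS, ENNReal.toReal_sub_of_le prob_le_one (by simp)]
      simp
      rfl
    have hQc : (Q Sᶜ).toReal = 1 - q := by
      rw [prob_compl_eq_one_sub hS, ENNReal.toReal_sub_of_le prob_le_one (by simp)]
      simp
      rfl
    have h1 : q ≤ Real.exp ε * p + δ := by
      have h := ENNReal.toReal_mono (by finiteness) (hQP S hS)
      rwa [ENNReal.toReal_add (by finiteness) (by finiteness), ENNReal.toReal_mul,
        ENNReal.toReal_ofReal (Real.exp_pos ε).le, ENNReal.toReal_ofReal hδ0] at h
    have h2 : 1 - p ≤ Real.exp ε * (1 - q) + δ := by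
      have h := ENNReal.toReal_mono (by finiteness) (hPQ Sᶜ hS.compl)
      rwa [ENNReal.toReal_add (by finiteness) (by finiteness), ENNReal.toReal_mul,
        ENNReal.toReal_ofReal (Real.exp_pos ε).le, ENNReal.toReal_ofReal hδ0,
        hPc, hQc] at h
    have hLHSne : 2⁻¹ * Q S + 2⁻¹ * P Sᶜ ≠ ⊤ := by finiteness
    rw [← ENNReal.ofReal_toReal hLHSne]
    apply ENNReal.ofReal_le_ofReal
    rw [ENNReal.toReal_add (by finiteness) (by finiteness), ENNReal.toReal_mul,
      ENNReal.toReal_mul, hPc]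
    have ht : (1 - δ) / (1 + Real.exp ε) * (1 + Real.exp ε) = 1 - δ :=
      div_mul_cancel₀ _ hEpos.ne'
    simp only [ENNReal.toReal_inv, ENNReal.toReal_ofNat]
    nlinarith [h1, h2, ht]
  refine ⟨main, fun h0 S hS => ?_⟩
  have := main S hS
  rw [h0] at this
  have heq : 1 - (1 - 0) / (1 + Real.exp ε) = Real.exp ε / (1 + Real.exp ε) := by
    field_simp
    ring
  rwa [heq] at this
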